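/- Let I ⊆ S' = K[x_1,…,x_n] be a squarefree monomial ideal, x a new variable, S = S'[x], and J = (I, x) ⊆ S. Then for every k with 2 ≤ k ≤ ν(I), one has J^[k] = I^[k] + x·I^[k−1] and I^[k] ∩ x·I^[k−1] = x·I^[k]. -/

import Mathlib

open MvPolynomial

/-- The squarefree monomial `∏ i ∈ F, xᵢ`. -/
noncomputable def sqMon (K : Type) [Field K] {σ : Type} (F : Finset σ) :
    MvPolynomial σ K := ∏ i ∈ F, X i

/-- `I` is a squarefree monomial ideal if it is generated by squarefree monomials. -/
def IsSqfreeMonomialIdeal (K : Type) [Field K] {σ : Type}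
    (I : Ideal (MvPolynomial σ K)) : Prop :=
  ∃ 𝒢 : Set (Finset σ), I = Ideal.span ((sqMon K) '' 𝒢)

/-- The `k`-th squarefree power `I^[k]`: the ideal generated by all squarefree
monomials belonging to `I^k`. -/
noncomputable def sqfreePower (K : Type) [Field K] {σ : Type}
    (I : Ideal (MvPolynomial σ K)) (k : ℕ) : Ideal (MvPolynomial σ K) :=
  Ideal.span {m | ∃ F : Finset σ, m = sqMon K F ∧ m ∈ I ^ k}

/-- The monomial grade `ν(I)`: the largest `k` with `I^[k] ≠ (0)`. -/
noncomputable def monGrade (K : Type) [Field K] {σ : Type}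
    (I : Ideal (MvPolynomial σ K)) : ℕ :=
  sSup {k | sqfreePower K I k ≠ ⊥}

/-- The initial degree of a squarefree monomial ideal: the least degree of a
(squarefree) monomial belonging to it. -/
noncomputable def indeg (K : Type) [Field K] {σ : Type}
    (I : Ideal (MvPolynomial σ K)) : ℕ :=
  sInf {d | ∃ F : Finset σ, F.card = d ∧ sqMon K F ∈ I}

/-- The depth of `S/I` over the polynomial ring `S`: the longest length of a
regular sequence on `S/I` consisting of elements of the irrelevant maximal ideal. -/
noncomputable def polyDepth (K : Type) [Field K] {σ : Type}
    (I : Ideal (MvPolynomial σ K)) : ℕ :=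
  sSup {k | ∃ rs : List (MvPolynomial σ K), rs.length = k ∧
    (∀ r ∈ rs, r ∈ Ideal.span (Set.range (X : σ → MvPolynomial σ K))) ∧
    RingTheory.Sequence.IsRegular (MvPolynomial σ K ⧸ I) rs}

/-- The normalized depth function `g_I(k) = depth(S/I^[k]) - (indeg(I^[k]) - 1)`. -/
noncomputable def nDepth (K : Type) [Field K] {σ : Type}
    (I : Ideal (MvPolynomial σ K)) (k : ℕ) : ℤ :=
  (polyDepth K (sqfreePower K I k) : ℤ) - ((indeg K (sqfreePower K I k) : ℤ) - 1)

section Aux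

/-- coefficient membership for powers of `map C I ⊔ (X)` -/
lemma coeff_mem_pow_aux {R : Type*} [CommRing R] (I : Ideal R) :
    ∀ (k : ℕ) (f : Polynomial R),
      f ∈ (Ideal.map (Polynomial.C : R →+* Polynomial R) I ⊔
        Ideal.span {(Polynomial.X : Polynomial R)}) ^ k →
      ∀ j, f.coeff j ∈ I ^ (k - j) := by
  intro k
  induction k with
  | zero =>
      intro f _ j
      simp [Nat.zero_sub]
  | succ k ih =>
      intro f hf
      rw [pow_succ'] at hf
      refine Submodule.mul_induction_on hf (fun a ha b hb j => ?_)
        (fun x y hx hy j => by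
          simpa [Polynomial.coeff_add] using add_mem (hx j) (hy j))
      rw [Polynomial.coeff_mul]
      refine Ideal.sum_mem _ fun c hc => ?_
      have hc' : c.1 + c.2 = j := Finset.HasAntidiagonal.mem_antidiagonal.mp hc
      have h1 : a.coeff c.1 ∈ I ^ (1 - c.1) := by
        obtain ⟨p, hp, q, hq, rfl⟩ := Submodule.mem_sup.mp ha
        rcases Nat.eq_zero_or_pos c.1 with h0 | h0
        · rw [h0]
          have hq0 : q.coeff 0 = 0 :=
            Polynomial.X_dvd_iff.mp (Ideal.mem_span_singleton.mp hq)
          have hp0 : p.coeff 0 ∈ I := Ideal.mem_map_C_iff.mp hp 0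
          simpa [hq0] using hp0
        · have h00 : 1 - c.1 = 0 := by omega
          rw [h00]
          simpa using Submodule.mem_top
      have h2 : b.coeff c.2 ∈ I ^ (k - c.2) := ih b hb c.2
      have h3 : a.coeff c.1 * b.coeff c.2 ∈ I ^ ((1 - c.1) + (k - c.2)) := by
        rw [pow_add]; exact Ideal.mul_mem_mul h1 h2
      exact Ideal.pow_le_pow_right (by omega) h3

lemma inf_lemma_aux {R : Type*} [CommRing R] (A B : Ideal R) (hAB : A ≤ B) :
    Ideal.map (Polynomial.C : R →+* Polynomial R) A ⊓
      (Ideal.span {(Polynomial.X : Polynomial R)} *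
        Ideal.map (Polynomial.C : R →+* Polynomial R) B) =
    Ideal.span {(Polynomial.X : Polynomial R)} *
      Ideal.map (Polynomial.C : R →+* Polynomial R) A := by
  apply le_antisymm
  · intro f hf
    obtain ⟨hfA, hfB⟩ := Submodule.mem_inf.mp hf
    obtain ⟨h, hh, rfl⟩ := Ideal.mem_span_singleton_mul.mp hfB
    refine Ideal.mul_mem_mul (Ideal.mem_span_singleton_self _) ?_
    rw [Ideal.mem_map_C_iff] at hfA ⊢
    intro m
    simpa [Polynomial.coeff_X_mul] using hfA (m + 1)
  · exact le_inf Ideal.mul_le_right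
      (Ideal.mul_mono_right (Ideal.map_mono hAB))

lemma sqfreePower_anti (K : Type) [Field K] {σ : Type}
    (I : Ideal (MvPolynomial σ K)) {a b : ℕ} (h : a ≤ b) :
    sqfreePower K I b ≤ sqfreePower K I a := by
  rw [sqfreePower, Ideal.span_le]
  rintro m ⟨F, rfl, hm⟩
  exact Ideal.subset_span ⟨F, rfl, Ideal.pow_le_pow_right h hm⟩

lemma map_equiv_inj {R S : Type*} [CommRing R] [CommRing S] (e : R ≃+* S)
    {A B : Ideal R} (h : Ideal.map (e : R →+* S) A = Ideal.map (e : R →+* S) B) :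
    A = B := by
  have h2 := congrArg (Ideal.map (e.symm : S →+* R)) h
  simpa using h2

lemma map_equiv_inf {R S : Type*} [CommRing R] [CommRing S] (e : R ≃+* S)
    (A B : Ideal R) :
    Ideal.map (e : R →+* S) (A ⊓ B) =
      Ideal.map (e : R →+* S) A ⊓ Ideal.map (e : R →+* S) B := by
  refine le_antisymm (le_inf (Ideal.map_mono inf_le_left) (Ideal.map_mono inf_le_right)) ?_
  intro x hx
  obtain ⟨hxA, hxB⟩ := Submodule.mem_inf.mp hx
  obtain ⟨a, haA, rfl⟩ := (Ideal.mem_map_iff_of_surjective _ e.surjective).mp hxA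
  obtain ⟨b, hbB, hba⟩ := (Ideal.mem_map_iff_of_surjective _ e.surjective).mp hxB
  have hb : b = a := e.injective hba
  exact Ideal.mem_map_of_mem _ (Submodule.mem_inf.mpr ⟨haA, hb ▸ hbB⟩)

/-- the algebra equivalence separating the last variable -/
noncomputable def eE (K : Type) [Field K] (n : ℕ) :
    MvPolynomial (Fin (n + 1)) K ≃ₐ[K] Polynomial (MvPolynomial (Fin n) K) :=
  (renameEquiv K finSuccEquivLast).trans (optionEquivLeft K (Fin n))

variable (K : Type) [Field K] (n : ℕ)

lemma eE_C (a : K) : eE K n (C a) = Polynomial.C (C a) := by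
  simp [eE, AlgEquiv.trans_apply, renameEquiv_apply, rename_C, optionEquivLeft_C]

lemma eE_X_castSucc (i : Fin n) :
    eE K n (X (Fin.castSucc i)) = Polynomial.C (X i) := by
  simp [eE, AlgEquiv.trans_apply, renameEquiv_apply, rename_X,
    finSuccEquivLast_castSucc, optionEquivLeft_X_some]

lemma eE_lastX : eE K n (X (Fin.last n)) = Polynomial.X := by
  simp [eE, AlgEquiv.trans_apply, renameEquiv_apply, rename_X,
    finSuccEquivLast_last, optionEquivLeft_X_none]

lemma eE_rename (p : MvPolynomial (Fin n) K) :
    eE K n (rename (Fin.castSucc : Fin n → Fin (n + 1)) p) = Polynomial.C p := by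
  induction p using MvPolynomial.induction_on with
  | C a => rw [rename_C, eE_C]
  | add p q hp hq => simp only [map_add, hp, hq]
  | mul_X p i hp => simp only [map_mul, rename_X, eE_X_castSucc, hp]

lemma map_rename_eq (L : Ideal (MvPolynomial (Fin n) K)) :
    Ideal.map ((eE K n).toRingEquiv : MvPolynomial (Fin (n + 1)) K →+* _)
        (Ideal.map (rename (Fin.castSucc : Fin n → Fin (n + 1))) L) =
      Ideal.map (Polynomial.C : MvPolynomial (Fin n) K →+* _) L := by
  have h1 : Ideal.map (rename (Fin.castSucc : Fin n → Fin (n + 1))) L =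
      Ideal.map (rename (Fin.castSucc : Fin n → Fin (n + 1))).toRingHom L := rfl
  rw [h1, Ideal.map_map]
  congr 1
  refine MvPolynomial.ringHom_ext (fun a => ?_) (fun i => ?_)
  · simpa using eE_C K n a
  · simpa using eE_X_castSucc K n i

lemma map_span_lastX :
    Ideal.map ((eE K n).toRingEquiv : MvPolynomial (Fin (n + 1)) K →+* _)
        (Ideal.span {(X (Fin.last n) : MvPolynomial (Fin (n + 1)) K)}) =
      Ideal.span {(Polynomial.X : Polynomial (MvPolynomial (Fin n) K))} := by
  rw [Ideal.map_span, Set.image_singleton]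
  congr 1
  simpa using eE_lastX K n

lemma sqMon_image (F' : Finset (Fin n)) :
    rename (Fin.castSucc : Fin n → Fin (n + 1)) (sqMon K F') =
      sqMon K (F'.image Fin.castSucc) := by
  classical
  rw [sqMon, sqMon, map_prod, Finset.prod_image]
  · simp [rename_X]
  · intro x _ y _ h
    exact Fin.castSucc_injective n h

lemma exists_image (F : Finset (Fin (n + 1))) (h : Fin.last n ∉ F) :
    ∃ F' : Finset (Fin n), F = F'.image Fin.castSucc := by
  classical
  refine ⟨F.preimage Fin.castSucc (Fin.castSucc_injective n).injOn, ?_⟩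
  ext j
  simp only [Finset.mem_image, Finset.mem_preimage]
  constructor
  · intro hj
    have hne : j ≠ Fin.last n := fun hl => h (hl ▸ hj)
    obtain ⟨i, rfl⟩ := Fin.exists_castSucc_eq.mpr hne
    exact ⟨i, hj, rfl⟩
  · rintro ⟨i, hi, rfl⟩
    exact hi

lemma last_not_mem_image (F' : Finset (Fin n)) :
    Fin.last n ∉ F'.image Fin.castSucc := by
  simp only [Finset.mem_image, not_exists]
  rintro i ⟨-, hl⟩
  exact (Fin.castSucc_lt_last i).ne hl

end Aux

section Halves

variable (K : Type) [Field K] (n : ℕ)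

lemma half2 (I : Ideal (MvPolynomial (Fin n) K)) (k : ℕ) :
    Ideal.map (rename (Fin.castSucc : Fin n → Fin (n + 1))) (sqfreePower K I k) ⊓
      (Ideal.span {(X (Fin.last n) : MvPolynomial (Fin (n + 1)) K)} *
        Ideal.map (rename (Fin.castSucc : Fin n → Fin (n + 1))) (sqfreePower K I (k - 1))) =
    Ideal.span {(X (Fin.last n) : MvPolynomial (Fin (n + 1)) K)} *
      Ideal.map (rename (Fin.castSucc : Fin n → Fin (n + 1))) (sqfreePower K I k) := by
  apply map_equiv_inj (eE K n).toRingEquiv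
  rw [map_equiv_inf, Ideal.map_mul, Ideal.map_mul, map_rename_eq, map_rename_eq,
    map_span_lastX]
  exact inf_lemma_aux _ _ (sqfreePower_anti K I (Nat.sub_le k 1))

lemma half1 (I : Ideal (MvPolynomial (Fin n) K)) (k : ℕ) (hk : 2 ≤ k) :
    sqfreePower K (Ideal.map (rename (Fin.castSucc : Fin n → Fin (n + 1))) I ⊔
        Ideal.span {(X (Fin.last n) : MvPolynomial (Fin (n + 1)) K)}) k =
      Ideal.map (rename (Fin.castSucc : Fin n → Fin (n + 1))) (sqfreePower K I k) ⊔
        Ideal.span {(X (Fin.last n) : MvPolynomial (Fin (n + 1)) K)} *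
          Ideal.map (rename (Fin.castSucc : Fin n → Fin (n + 1)))
            (sqfreePower K I (k - 1)) := by
  classical
  set J := Ideal.map (rename (Fin.castSucc : Fin n → Fin (n + 1))) I ⊔
      Ideal.span {(X (Fin.last n) : MvPolynomial (Fin (n + 1)) K)} with hJdef
  have hJle : Ideal.map (rename (Fin.castSucc : Fin n → Fin (n + 1))) I ≤ J := le_sup_left
  have hxJ : (X (Fin.last n) : MvPolynomial (Fin (n + 1)) K) ∈ J :=
    Submodule.mem_sup_right (Ideal.mem_span_singleton_self _)
  have hpush : ∀ m : MvPolynomial (Fin (n + 1)) K, m ∈ J ^ k →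
      (eE K n) m ∈ (Ideal.map (Polynomial.C :
          MvPolynomial (Fin n) K →+* Polynomial (MvPolynomial (Fin n) K)) I ⊔
        Ideal.span {(Polynomial.X : Polynomial (MvPolynomial (Fin n) K))}) ^ k := by
    intro m hm
    have h1 : ((eE K n).toRingEquiv : MvPolynomial (Fin (n + 1)) K →+* _) m ∈
        Ideal.map ((eE K n).toRingEquiv :
          MvPolynomial (Fin (n + 1)) K →+* Polynomial (MvPolynomial (Fin n) K)) (J ^ k) :=
      Ideal.mem_map_of_mem _ hm
    rwa [Ideal.map_pow, hJdef, Ideal.map_sup, map_rename_eq, map_span_lastX] at h1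
  apply map_equiv_inj (eE K n).toRingEquiv
  rw [Ideal.map_sup, Ideal.map_mul, map_rename_eq, map_rename_eq, map_span_lastX]
  rw [show sqfreePower K J k =
      Ideal.span {m | ∃ F : Finset (Fin (n + 1)), m = sqMon K F ∧ m ∈ J ^ k} from rfl,
    Ideal.map_span]
  apply le_antisymm
  · rw [Ideal.span_le]
    rintro y ⟨m, ⟨F, rfl, hmJ⟩, rfl⟩
    have hmE := hpush _ hmJ
    by_cases hl : Fin.last n ∈ F
    · have hF1 : sqMon K F = X (Fin.last n) * sqMon K (F.erase (Fin.last n)) := by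
        simp only [sqMon]
        rw [← Finset.prod_insert (Finset.notMem_erase (Fin.last n) F),
          Finset.insert_erase hl]
      obtain ⟨F', hF'⟩ := exists_image n (F.erase (Fin.last n)) (Finset.notMem_erase _ _)
      have hF2 : sqMon K F =
          X (Fin.last n) * rename (Fin.castSucc : Fin n → Fin (n + 1)) (sqMon K F') := by
        rw [hF1, hF', ← sqMon_image]
      have hcoeff : sqMon K F' ∈ I ^ (k - 1) := by
        have h2 := coeff_mem_pow_aux I k _ hmE 1
        rw [hF2, map_mul, eE_lastX, eE_rename] at h2
        simpa using h2
      have hmem : sqMon K F' ∈ sqfreePower K I (k - 1) :=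
        Ideal.subset_span ⟨F', rfl, hcoeff⟩
      have hfin : (eE K n) (sqMon K F) ∈
          Ideal.span {(Polynomial.X : Polynomial (MvPolynomial (Fin n) K))} *
            Ideal.map (Polynomial.C :
              MvPolynomial (Fin n) K →+* Polynomial (MvPolynomial (Fin n) K))
              (sqfreePower K I (k - 1)) := by
        rw [hF2, map_mul, eE_lastX, eE_rename]
        exact Ideal.mul_mem_mul (Ideal.mem_span_singleton_self _)
          (Ideal.mem_map_of_mem _ hmem)
      exact Submodule.mem_sup_right hfin
    · obtain ⟨F', rfl⟩ := exists_image n F hl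
      have hcoeff : sqMon K F' ∈ I ^ k := by
        have h2 := coeff_mem_pow_aux I k _ hmE 0
        rw [← sqMon_image, eE_rename] at h2
        simpa using h2
      have hfin : (eE K n) (sqMon K (F'.image Fin.castSucc)) ∈
          Ideal.map (Polynomial.C :
            MvPolynomial (Fin n) K →+* Polynomial (MvPolynomial (Fin n) K))
            (sqfreePower K I k) := by
        rw [← sqMon_image, eE_rename]
        exact Ideal.mem_map_of_mem _ (Ideal.subset_span ⟨F', rfl, hcoeff⟩)
      exact Submodule.mem_sup_left hfin
  · apply sup_le
    · rw [show sqfreePower K I k =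
          Ideal.span {m' | ∃ F' : Finset (Fin n), m' = sqMon K F' ∧ m' ∈ I ^ k} from rfl,
        Ideal.map_span, Ideal.span_le]
      rintro y ⟨m', ⟨F', rfl, hm'⟩, rfl⟩
      refine Ideal.subset_span ⟨sqMon K (F'.image Fin.castSucc),
        ⟨F'.image Fin.castSucc, rfl, ?_⟩, ?_⟩
      · rw [← sqMon_image]
        have h1 := Ideal.mem_map_of_mem
          (rename (Fin.castSucc : Fin n → Fin (n + 1))) hm'
        rw [Ideal.map_pow] at h1
        exact Ideal.pow_right_mono hJle k h1
      · rw [← sqMon_image]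
        exact eE_rename K n _
    · rw [show sqfreePower K I (k - 1) =
          Ideal.span {m' | ∃ F' : Finset (Fin n), m' = sqMon K F' ∧ m' ∈ I ^ (k - 1)}
          from rfl,
        Ideal.map_span, Ideal.span_mul_span', Ideal.span_le]
      intro y hy
      rw [Set.mem_mul] at hy
      obtain ⟨a, ha, b, hb, rfl⟩ := hy
      rw [Set.mem_singleton_iff] at ha
      subst ha
      obtain ⟨m', ⟨F', rfl, hm'⟩, rfl⟩ := hb
      have hsq : sqMon K (insert (Fin.last n) (F'.image Fin.castSucc)) =
          X (Fin.last n) * rename (Fin.castSucc : Fin n → Fin (n + 1)) (sqMon K F') := by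
        rw [sqMon_image]
        simp only [sqMon]
        rw [← Finset.prod_insert (last_not_mem_image n F')]
      refine Ideal.subset_span ⟨sqMon K (insert (Fin.last n) (F'.image Fin.castSucc)),
        ⟨insert (Fin.last n) (F'.image Fin.castSucc), rfl, ?_⟩, ?_⟩
      · rw [hsq]
        have h1 : rename (Fin.castSucc : Fin n → Fin (n + 1)) (sqMon K F') ∈
            J ^ (k - 1) := by
          have h0 := Ideal.mem_map_of_mem
            (rename (Fin.castSucc : Fin n → Fin (n + 1))) hm'
          rw [Ideal.map_pow] at h0
          exact Ideal.pow_right_mono hJle (k - 1) h0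
        have h2 := Ideal.mul_mem_mul hxJ h1
        rwa [← pow_succ', show k - 1 + 1 = k from by omega] at h2
      · have hgoal : eE K n (sqMon K (insert (Fin.last n) (F'.image Fin.castSucc))) =
            Polynomial.X * Polynomial.C (sqMon K F') := by
          rw [hsq, map_mul, eE_lastX, eE_rename]
        exact hgoal

end Halves


/-- For a squarefree monomial ideal `I ⊆ S' = K[x₁,…,xₙ]` and `J = (I, x) ⊆ S = S'[x]`,
for every `2 ≤ k ≤ ν(I)` one has `J^[k] = I^[k] + x·I^[k−1]` and
`I^[k] ∩ x·I^[k−1] = x·I^[k]` (squarefree powers of `I` regarded in `S` via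
extension along `S' ↪ S`). -/
theorem sqfreePower_of_adjoin_variable_splitting (K : Type) [Field K] (n : ℕ)
    (I : Ideal (MvPolynomial (Fin n) K)) (hI : IsSqfreeMonomialIdeal K I)
    (J : Ideal (MvPolynomial (Fin (n + 1)) K))
    (hJ : J = Ideal.map (MvPolynomial.rename (Fin.castSucc : Fin n → Fin (n + 1))) I ⊔
              Ideal.span {MvPolynomial.X (Fin.last n)}) :
    ∀ k : ℕ, 2 ≤ k → k ≤ monGrade K I →
      sqfreePower K J k =
        Ideal.map (MvPolynomial.rename (Fin.castSucc : Fin n → Fin (n + 1)))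
            (sqfreePower K I k) ⊔
          Ideal.span {MvPolynomial.X (Fin.last n)} *
            Ideal.map (MvPolynomial.rename (Fin.castSucc : Fin n → Fin (n + 1)))
              (sqfreePower K I (k - 1)) ∧
      Ideal.map (MvPolynomial.rename (Fin.castSucc : Fin n → Fin (n + 1)))
            (sqfreePower K I k) ⊓
          (Ideal.span {MvPolynomial.X (Fin.last n)} *
            Ideal.map (MvPolynomial.rename (Fin.castSucc : Fin n → Fin (n + 1)))
              (sqfreePower K I (k - 1))) =
        Ideal.span {MvPolynomial.X (Fin.last n)} *
          Ideal.map (MvPolynomial.rename (Fin.castSucc : Fin n → Fin (n + 1)))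
            (sqfreePower K I k) := by
  intro k hk2 _hk
  subst hJ
  exact ⟨half1 K n I k hk2, half2 K n I k⟩
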